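/- Let there be n ≥ 3 agents and m ≥ n indivisible chores with additive nonnegative cost functions, and suppose agent i satisfies c_i(M_i^-) > 3n²·c_i(σ_i(n−1)). Let b_i = c_i(M_i^-)/(3n² − n + 2) and L_i = {e ∈ M : c_i(e) ≥ b_i}. Then for every allocation X = (X_1,…,X_n) of M and every agent j such that X_i ∩ L_i = ∅ and L_i ∩ X_j ≠ ∅, it holds that c_i(X_i) ≤ 3n²·c_i(X_j). -/

import Mathlib

open Finset

/-- `n ≥ 3` agents, `m ≥ n` chores, additive nonnegative costs.  `σ i` enumerates
`M` from most to least costly under `c i` (0-indexed, so the paper's `σ_i(k)` is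
`σ i (k-1)`), and `M_i^- = M` minus the `n-1` most costly items under `c i`.
Suppose agent `i` satisfies `c_i(M_i^-) > 3n² · c_i(σ_i(n-1))`.  Let
`b_i = c_i(M_i^-)/(3n² - n + 2)` and `L_i = {e ∈ M : c_i(e) ≥ b_i}`.  Then for
every allocation `X` of `M` and every agent `j` with `X_i ∩ L_i = ∅` and
`L_i ∩ X_j ≠ ∅`, we have `c_i(X_i) ≤ 3n² · c_i(X_j)`. -/
theorem stmt_8 {ι : Type*} [DecidableEq ι] (n m : ℕ) (hn : 3 ≤ n) (hmn : n ≤ m)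
    (M : Finset ι) (hM : M.card = m)
    (c : Fin n → ι → ℝ) (hc : ∀ i, ∀ e ∈ M, 0 ≤ c i e)
    (σ : Fin n → ℕ → ι)
    (hσmem : ∀ i, ∀ k < m, σ i k ∈ M)
    (hσinj : ∀ i, ∀ k < m, ∀ l < m, σ i k = σ i l → k = l)
    (hσmono : ∀ i, ∀ k l, k ≤ l → l < m → c i (σ i l) ≤ c i (σ i k))
    (i : Fin n)
    (Mi : Finset ι) (hMi : Mi = M \ (Finset.image (σ i) (Finset.range (n - 1))))
    (hi : ∑ e ∈ Mi, c i e > 3 * (n : ℝ) ^ 2 * c i (σ i (n - 2)))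
    (b : ℝ) (hb : b = (∑ e ∈ Mi, c i e) / (3 * (n : ℝ) ^ 2 - (n : ℝ) + 2))
    (L : Finset ι) (hL : ∀ e, e ∈ L ↔ e ∈ M ∧ b ≤ c i e)
    (X : Fin n → Finset ι)
    (hdisj : ∀ j k, j ≠ k → Disjoint (X j) (X k))
    (hcover : Finset.univ.biUnion X = M)
    (j : Fin n)
    (hXi : X i ∩ L = ∅)
    (hXj : (L ∩ X j).Nonempty) :
    ∑ e ∈ X i, c i e ≤ 3 * (n : ℝ) ^ 2 * ∑ e ∈ X j, c i e := by
  have hn3 : (3:ℝ) ≤ (n:ℝ) := by exact_mod_cast hn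
  have hD : (0:ℝ) < 3 * (n:ℝ)^2 - (n:ℝ) + 2 := by nlinarith
  set S := ∑ e ∈ Mi, c i e with hSdef
  have hn2m : n - 2 < m := by omega
  have hmemn2 : σ i (n-2) ∈ M := hσmem i (n-2) hn2m
  have hcn2 : 0 ≤ c i (σ i (n-2)) := hc i _ hmemn2
  have hSpos : 0 < S := lt_of_le_of_lt (by positivity) hi
  have hbpos : 0 < b := hb ▸ div_pos hSpos hD
  have hbS : S = (3 * (n:ℝ)^2 - (n:ℝ) + 2) * b := by
    rw [hb, mul_div_assoc']; exact (mul_div_cancel_left₀ S hD.ne').symm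
  have hcb : c i (σ i (n-2)) < b := by
    rw [hb, lt_div_iff₀ hD]
    nlinarith
  -- every element of M is σ i k for some k < m
  have hsurj : ∀ e ∈ M, ∃ k < m, σ i k = e := by
    have hsub : Finset.image (σ i) (Finset.range m) ⊆ M := by
      intro e he
      obtain ⟨k, hk, rfl⟩ := Finset.mem_image.mp he
      exact hσmem i k (Finset.mem_range.mp hk)
    have hcard : M.card ≤ (Finset.image (σ i) (Finset.range m)).card := by
      rw [Finset.card_image_of_injOn, Finset.card_range, hM]
      intro k hk l hl h
      exact hσinj i k (Finset.mem_range.mp hk) l (Finset.mem_range.mp hl) h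
    have := Finset.eq_of_subset_of_card_le hsub hcard
    intro e he
    rw [← this] at he
    obtain ⟨k, hk, hke⟩ := Finset.mem_image.mp he
    exact ⟨k, Finset.mem_range.mp hk, hke⟩
  set T := Finset.image (σ i) (Finset.range (n-1)) with hT
  have hLT : L ⊆ T := by
    intro e he
    obtain ⟨heM, hbe⟩ := (hL e).mp he
    obtain ⟨k, hkm, rfl⟩ := hsurj e heM
    have hklt : k < n - 1 := by
      by_contra h
      have hk2 : n - 2 ≤ k := by omega
      have := hσmono i (n-2) k hk2 hkm
      linarith
    exact Finset.mem_image.mpr ⟨k, Finset.mem_range.mpr hklt, rfl⟩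
  have hXsub : ∀ k, X k ⊆ M := fun k => hcover ▸ Finset.subset_biUnion_of_mem X (Finset.mem_univ k)
  obtain ⟨e0, he0⟩ := hXj
  have he0L : e0 ∈ L := (Finset.mem_inter.mp he0).1
  have he0Xj : e0 ∈ X j := (Finset.mem_inter.mp he0).2
  have hij : i ≠ j := by
    rintro rfl
    have : e0 ∈ X i ∩ L := Finset.mem_inter.mpr ⟨he0Xj, he0L⟩
    rw [hXi] at this
    exact absurd this (Finset.notMem_empty _)
  have he0Xi : e0 ∉ X i := fun h => Finset.disjoint_left.mp (hdisj i j hij) h he0Xj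
  -- card bound
  have hcardXT : (X i ∩ T).card ≤ n - 2 := by
    have h1 : X i ∩ T ⊆ T.erase e0 := by
      intro e he
      obtain ⟨heX, heT⟩ := Finset.mem_inter.mp he
      exact Finset.mem_erase.mpr ⟨fun h => he0Xi (h ▸ heX), heT⟩
    calc (X i ∩ T).card ≤ (T.erase e0).card := Finset.card_le_card h1
      _ = T.card - 1 := Finset.card_erase_of_mem (hLT he0L)
      _ ≤ (n - 1) - 1 := by
          have hTc : T.card ≤ n - 1 := by
            rw [hT]
            simpa using Finset.card_image_le (s := Finset.range (n-1)) (f := σ i)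
          omega
      _ ≤ n - 2 := by omega
  -- cost bound on X i ∩ T
  have hcostXT : ∑ e ∈ X i ∩ T, c i e ≤ ((n:ℝ) - 2) * b := by
    have hub : ∀ e ∈ X i ∩ T, c i e ≤ b := by
      intro e he
      obtain ⟨heX, heT⟩ := Finset.mem_inter.mp he
      have heM : e ∈ M := hXsub i heX
      have heL : e ∉ L := fun h => by
        have : e ∈ X i ∩ L := Finset.mem_inter.mpr ⟨heX, h⟩
        rw [hXi] at this; exact absurd this (Finset.notMem_empty _)
      have : ¬ b ≤ c i e := fun h => heL ((hL e).mpr ⟨heM, h⟩)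
      linarith
    calc ∑ e ∈ X i ∩ T, c i e ≤ (X i ∩ T).card • b := Finset.sum_le_card_nsmul _ _ _ hub
      _ = ((X i ∩ T).card : ℝ) * b := by rw [nsmul_eq_mul]
      _ ≤ ((n:ℝ) - 2) * b := by
          apply mul_le_mul_of_nonneg_right _ hbpos.le
          have : ((X i ∩ T).card : ℝ) ≤ ((n - 2 : ℕ) : ℝ) := Nat.cast_le.mpr hcardXT
          have h2 : ((n - 2 : ℕ) : ℝ) = (n:ℝ) - 2 := by
            have : 2 ≤ n := by omega
            push_cast [Nat.cast_sub this]; ring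
          linarith
  -- split X i
  have hsplit : ∑ e ∈ X i, c i e = ∑ e ∈ X i ∩ T, c i e + ∑ e ∈ X i \ T, c i e :=
    (Finset.sum_inter_add_sum_sdiff _ _ _).symm
  have hdiffsub : X i \ T ⊆ Mi := by
    rw [hMi]
    intro e he
    obtain ⟨heX, heT⟩ := Finset.mem_sdiff.mp he
    exact Finset.mem_sdiff.mpr ⟨hXsub i heX, heT⟩
  have hcostdiff : ∑ e ∈ X i \ T, c i e ≤ S := by
    apply Finset.sum_le_sum_of_subset_of_nonneg hdiffsub
    intro e he _
    exact hc i e (by rw [hMi] at he; exact (Finset.mem_sdiff.mp he).1)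
  -- lower bound on X j
  have hbXj : b ≤ ∑ e ∈ X j, c i e := by
    have h1 : b ≤ c i e0 := ((hL e0).mp he0L).2
    have h2 : c i e0 ≤ ∑ e ∈ X j, c i e :=
      Finset.single_le_sum (fun e he => hc i e (hXsub j he)) he0Xj
    linarith
  have h3n2 : (0:ℝ) ≤ 3 * (n:ℝ)^2 := by positivity
  calc ∑ e ∈ X i, c i e ≤ S + ((n:ℝ) - 2) * b := by rw [hsplit]; linarith
    _ = 3 * (n:ℝ)^2 * b := by rw [hbS]; ring
    _ ≤ 3 * (n:ℝ)^2 * ∑ e ∈ X j, c i e := mul_le_mul_of_nonneg_left hbXj h3n2
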